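/- Under the lognormal-error pricing model with margin M > 0, elasticity η > 0, model correlation ρ ∈ (0,1], and coefficient of variation CV > 0, the expected loss ratio satisfies LR = (1/M)·((1 + ρ²·CV⁻²)/(ρ²·(1 + CV⁻²)))^{(2η−1)/2}. -/

import Mathlib

open MeasureTheory ProbabilityTheory

section Helpers

lemma measurable_rpow_const (c : ℝ) : Measurable (fun x : ℝ => x ^ c) := by
  have heq : (fun x : ℝ => x ^ c) = fun x =>
      if x = 0 then (if c = 0 then 1 else 0)
      else Real.exp (Real.log x * c) * (if x < 0 then Real.cos (c * Real.pi) else 1) := by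
    funext x
    rcases lt_trichotomy x 0 with h | h | h
    · rw [if_neg h.ne, if_pos h, Real.rpow_def_of_neg h, mul_comm c Real.pi]
    · subst h
      by_cases hc : c = 0
      · simp [hc]
      · simp [hc, Real.zero_rpow hc]
    · rw [if_neg h.ne', if_neg (not_lt.mpr h.le), Real.rpow_def_of_pos h, mul_one]
  rw [heq]
  refine Measurable.ite (MeasurableSet.singleton 0) measurable_const ?_
  exact ((Real.measurable_log.mul measurable_const).exp.mul
    (Measurable.ite (measurableSet_lt measurable_id measurable_const)
      measurable_const measurable_const))

lemma gauss_pdf_shift (v : NNReal) (hv : v ≠ 0) (t x : ℝ) :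
    Real.exp (t * x) * gaussianPDFReal 0 v x
      = Real.exp ((v : ℝ) * t ^ 2 / 2) * gaussianPDFReal (t * v) v x := by
  have hv' : (0 : ℝ) < v := lt_of_le_of_ne (v.coe_nonneg) (by exact_mod_cast (Ne.symm hv))
  rw [gaussianPDFReal_def, gaussianPDFReal_def]
  dsimp only
  rw [mul_comm (Real.exp (t * x)), mul_assoc, mul_left_comm (Real.exp ((v:ℝ) * t^2/2)),
    ← Real.exp_add, ← Real.exp_add]
  congr 1
  field_simp
  ring

lemma integral_gaussianReal_pdf (m : ℝ) {v : NNReal} (hv : v ≠ 0) (f : ℝ → ℝ) :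
    ∫ x, f x ∂(gaussianReal m v) = ∫ x, gaussianPDFReal m v x * f x := by
  rw [gaussianReal_of_var_ne_zero m hv]
  have h1 : gaussianPDF m v = fun x => ((Real.toNNReal (gaussianPDFReal m v x) : NNReal) : ENNReal) := by
    funext x
    rw [gaussianPDF_def]
    rfl
  rw [h1, integral_withDensity_eq_integral_smul
    ((measurable_gaussianPDFReal m v).real_toNNReal) f]
  congr 1
  funext x
  rw [NNReal.smul_def, smul_eq_mul, Real.coe_toNNReal _ (gaussianPDFReal_nonneg m v x)]

lemma integrable_gaussianReal_iff (m : ℝ) {v : NNReal} (hv : v ≠ 0) (f : ℝ → ℝ) :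
    Integrable f (gaussianReal m v) ↔ Integrable (fun x => gaussianPDFReal m v x * f x) volume := by
  rw [gaussianReal_of_var_ne_zero m hv]
  have h1 : gaussianPDF m v = fun x => ((Real.toNNReal (gaussianPDFReal m v x) : NNReal) : ENNReal) := by
    funext x
    rw [gaussianPDF_def]
    rfl
  rw [h1, integrable_withDensity_iff_integrable_smul
    ((measurable_gaussianPDFReal m v).real_toNNReal)]
  constructor <;> intro h <;> refine h.congr (Filter.Eventually.of_forall fun x => ?_) <;>
    simp [NNReal.smul_def, Real.coe_toNNReal _ (gaussianPDFReal_nonneg m v x)]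

lemma integral_exp_gaussianReal (v : NNReal) (t : ℝ) :
    ∫ x, Real.exp (t * x) ∂(gaussianReal 0 v) = Real.exp ((v : ℝ) * t ^ 2 / 2) := by
  by_cases hv : v = 0
  · subst hv
    simp [gaussianReal_zero_var]
  · rw [integral_gaussianReal_pdf 0 hv]
    have : ∀ x, gaussianPDFReal 0 v x * Real.exp (t * x)
        = Real.exp ((v : ℝ) * t ^ 2 / 2) * gaussianPDFReal (t * v) v x := by
      intro x
      rw [mul_comm, gauss_pdf_shift v hv]
    simp_rw [this]
    rw [MeasureTheory.integral_const_mul, integral_gaussianPDFReal_eq_one _ hv, mul_one]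

lemma integrable_exp_gaussianReal (v : NNReal) (t : ℝ) :
    Integrable (fun x => Real.exp (t * x)) (gaussianReal 0 v) := by
  by_cases hv : v = 0
  · subst hv
    rw [gaussianReal_zero_var]
    refine ⟨((measurable_id.const_mul t).exp).aestronglyMeasurable, ?_⟩
    simp [HasFiniteIntegral, lintegral_dirac]
  · rw [integrable_gaussianReal_iff 0 hv]
    have : (fun x => gaussianPDFReal 0 v x * Real.exp (t * x))
        = fun x => Real.exp ((v : ℝ) * t ^ 2 / 2) * gaussianPDFReal (t * v) v x := by
      funext x
      rw [mul_comm, gauss_pdf_shift v hv]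
    rw [this]
    exact (integrable_gaussianPDFReal (t * v) v).const_mul _

lemma rpow_num_helper {M l e η K : ℝ} (hM : 0 < M) (hl : 0 < l) :
    l * (K * (M * (l * Real.exp e)) ^ (-η))
      = (K * M ^ (-η)) * (l ^ (1 - η) * Real.exp (-η * e)) := by
  rw [Real.mul_rpow hM.le (by positivity), Real.mul_rpow hl.le (Real.exp_pos e).le,
    ← Real.exp_mul, mul_comm e (-η)]
  have hle : l * l ^ (-η) = l ^ (1 - η) := by
    nth_rewrite 1 [← Real.rpow_one l]
    rw [← Real.rpow_add hl]
    congr 1 <;> ring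
  linear_combination (K * M ^ (-η) * Real.exp (-η * e)) * hle

lemma rpow_den_helper {M l e η K : ℝ} (hM : 0 < M) (hl : 0 < l) :
    (M * (l * Real.exp e)) * (K * (M * (l * Real.exp e)) ^ (-η))
      = (K * M ^ (1 - η)) * (l ^ (1 - η) * Real.exp ((1 - η) * e)) := by
  have hP : 0 < M * (l * Real.exp e) := by positivity
  have h1 : (M * (l * Real.exp e)) * (M * (l * Real.exp e)) ^ (-η)
      = (M * (l * Real.exp e)) ^ (1 - η) := by
    nth_rewrite 1 [← Real.rpow_one (M * (l * Real.exp e))]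
    rw [← Real.rpow_add hP]
    congr 1 <;> ring
  have h2 : (M * (l * Real.exp e)) ^ (1 - η)
      = M ^ (1 - η) * (l ^ (1 - η) * Real.exp ((1 - η) * e)) := by
    rw [Real.mul_rpow hM.le (by positivity), Real.mul_rpow hl.le (Real.exp_pos e).le,
      ← Real.exp_mul, mul_comm e (1 - η)]
  calc (M * (l * Real.exp e)) * (K * (M * (l * Real.exp e)) ^ (-η))
      = K * ((M * (l * Real.exp e)) * (M * (l * Real.exp e)) ^ (-η)) := by ring
    _ = K * (M ^ (1 - η) * (l ^ (1 - η) * Real.exp ((1 - η) * e))) := by rw [h1, h2]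
    _ = (K * M ^ (1 - η)) * (l ^ (1 - η) * Real.exp ((1 - η) * e)) := by ring

end Helpers

/-- Core loss ratio formula: under the lognormal-error pricing model with margin `M`,
power-law demand with elasticity `η`, model correlation `ρ = Corr(λ̂, λ)` and coefficient of
variation `CV`, the expected loss ratio satisfies
`LR = (1/M)·((1 + ρ²·CV⁻²)/(ρ²·(1 + CV⁻²)))^{(2η−1)/2}`. -/
theorem core_loss_ratio_formula
    {Ω : Type*} [MeasurableSpace Ω] (μ : Measure Ω) [IsProbabilityMeasure μ]
    (lam ε : Ω → ℝ) (v : NNReal) (M K η : ℝ)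
    (hM : 0 < M) (hK : 0 < K) (hη : 0 < η)
    (hlam_meas : Measurable lam) (hε_meas : Measurable ε)
    (hlam_pos : ∀ᵐ ω ∂μ, 0 < lam ω)
    (hlam_sq : Integrable (fun ω => (lam ω) ^ 2) μ)
    (hvar_pos : 0 < variance lam μ)
    (hmom : Integrable (fun ω => lam ω ^ (1 - η)) μ)
    (hmom_pos : 0 < ∫ ω, lam ω ^ (1 - η) ∂μ)
    (hε_law : Measure.map ε μ = gaussianReal 0 v)
    (hindep : IndepFun lam ε μ)
    (lamHat p : Ω → ℝ)
    (hlamHat : lamHat = fun ω => lam ω * Real.exp (ε ω))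
    (hp : p = fun ω => M * lamHat ω)
    (ρ : ℝ)
    (hρ : ρ = ((∫ ω, lamHat ω * lam ω ∂μ) - (∫ ω, lamHat ω ∂μ) * (∫ ω, lam ω ∂μ))
        / (Real.sqrt (variance lamHat μ) * Real.sqrt (variance lam μ)))
    (CV : ℝ) (hCV : CV = Real.sqrt (variance lam μ) / (∫ ω, lam ω ∂μ))
    (LR : ℝ)
    (hLR : LR = (∫ ω, lam ω * (K * p ω ^ (-η)) ∂μ) / (∫ ω, p ω * (K * p ω ^ (-η)) ∂μ)) :
    LR = (1 / M) * ((1 + ρ ^ 2 * (CV ^ 2)⁻¹) / (ρ ^ 2 * (1 + (CV ^ 2)⁻¹)))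
        ^ ((2 * η - 1) / 2) := by
  -- Gaussian exponential moments
  have hIt : ∀ t : ℝ, Integrable (fun ω => Real.exp (t * ε ω)) μ := by
    intro t
    have h1 : Integrable (fun x => Real.exp (t * x)) (Measure.map ε μ) := by
      rw [hε_law]; exact integrable_exp_gaussianReal v t
    exact (integrable_map_measure h1.aestronglyMeasurable hε_meas.aemeasurable).mp h1
  have hEt : ∀ t : ℝ, ∫ ω, Real.exp (t * ε ω) ∂μ = Real.exp ((v : ℝ) * t ^ 2 / 2) := by
    intro t
    rw [← integral_exp_gaussianReal v t, ← hε_law,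
      integral_map hε_meas.aemeasurable]
    exact ((measurable_id.const_mul t).exp.aestronglyMeasurable)
  -- basic integrability
  have hlam_int : Integrable lam μ :=
    ((memLp_two_iff_integrable_sq hlam_meas.aestronglyMeasurable).mpr hlam_sq).integrable
      one_le_two
  -- product rule for independent functions
  have hprod : ∀ (g h : ℝ → ℝ), Measurable g → Measurable h →
      Integrable (fun ω => g (lam ω)) μ → Integrable (fun ω => h (ε ω)) μ →
      Integrable (fun ω => g (lam ω) * h (ε ω)) μ ∧
      ∫ ω, g (lam ω) * h (ε ω) ∂μ = (∫ ω, g (lam ω) ∂μ) * ∫ ω, h (ε ω) ∂μ := by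
    intro g h hg hh hgi hhi
    have hi : IndepFun (g ∘ lam) (h ∘ ε) μ := hindep.comp hg hh
    exact ⟨hi.integrable_mul hgi hhi, hi.integral_mul_eq_mul_integral hgi.aestronglyMeasurable hhi.aestronglyMeasurable⟩
  -- notation
  set m := ∫ ω, lam ω ∂μ with hm_def
  set s2 := variance lam μ with hs2_def
  set q := ∫ ω, (lam ω) ^ 2 ∂μ with hq_def
  set J := ∫ ω, lam ω ^ (1 - η) ∂μ with hJ_def
  set e := Real.exp (v : ℝ) with he_def
  have he_pos : 0 < e := Real.exp_pos _
  have hs2_pos : 0 < s2 := hvar_pos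
  -- m > 0
  have hm_pos : 0 < m := by
    rw [hm_def, integral_pos_iff_support_of_nonneg_ae
      (hlam_pos.mono fun ω h => h.le) hlam_int]
    have hc : μ (Function.support lam)ᶜ = 0 := by
      refine measure_mono_null ?_ hlam_pos
      intro ω hω
      simp only [Function.mem_support, Set.mem_compl_iff, not_not] at hω
      simp [hω]
    have hs := measure_add_measure_compl (μ := μ) (measurableSet_support hlam_meas)
    rw [hc, add_zero, measure_univ] at hs
    rw [hs]; norm_num
  -- variance of lam
  have hlam_mem : MemLp lam 2 μ :=
    (memLp_two_iff_integrable_sq hlam_meas.aestronglyMeasurable).mpr hlam_sq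
  have hvar_lam : s2 = q - m ^ 2 := by
    rw [hs2_def, variance_eq_sub hlam_mem]
    rfl
  -- exponential integrals as powers of e
  have hE1sq : Real.exp ((v : ℝ) * 1 ^ 2 / 2) ^ 2 = e := by
    rw [sq, ← Real.exp_add, he_def]; congr 1; ring
  have hE2 : Real.exp ((v : ℝ) * 2 ^ 2 / 2) = e ^ 2 := by
    rw [show ((v : ℝ) * 2 ^ 2 / 2) = (v : ℝ) + (v : ℝ) by ring, Real.exp_add, he_def, sq]
  -- moments of lamHat
  have hHat_eq1 : (fun ω => lamHat ω) = fun ω => lam ω * Real.exp (1 * ε ω) := by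
    funext ω; rw [hlamHat]; simp
  have hHat_int : ∫ ω, lamHat ω ∂μ = m * Real.exp ((v : ℝ) * 1 ^ 2 / 2) := by
    have := (hprod (fun x => x) (fun x => Real.exp (1 * x)) measurable_id
      ((measurable_id.const_mul 1).exp) hlam_int (hIt 1)).2
    calc ∫ ω, lamHat ω ∂μ = ∫ ω, lam ω * Real.exp (1 * ε ω) ∂μ := by rw [hHat_eq1]
      _ = (∫ ω, lam ω ∂μ) * ∫ ω, Real.exp (1 * ε ω) ∂μ := this
      _ = m * Real.exp ((v : ℝ) * 1 ^ 2 / 2) := by rw [hEt 1]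
  have hHatlam : ∫ ω, lamHat ω * lam ω ∂μ = q * Real.exp ((v : ℝ) * 1 ^ 2 / 2) := by
    have heq : (fun ω => lamHat ω * lam ω) = fun ω => (lam ω) ^ 2 * Real.exp (1 * ε ω) := by
      funext ω; rw [hlamHat]; simp; ring
    have := (hprod (fun x => x ^ 2) (fun x => Real.exp (1 * x)) (measurable_id.pow_const 2)
      ((measurable_id.const_mul 1).exp) hlam_sq (hIt 1)).2
    calc ∫ ω, lamHat ω * lam ω ∂μ = ∫ ω, (lam ω) ^ 2 * Real.exp (1 * ε ω) ∂μ := by rw [heq]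
      _ = (∫ ω, (lam ω) ^ 2 ∂μ) * ∫ ω, Real.exp (1 * ε ω) ∂μ := this
      _ = q * Real.exp ((v : ℝ) * 1 ^ 2 / 2) := by rw [hEt 1]
  have hHat_sq_eq : (fun ω => lamHat ω ^ 2) = fun ω => (lam ω) ^ 2 * Real.exp (2 * ε ω) := by
    funext ω
    rw [hlamHat]
    simp only [mul_pow, sq (Real.exp (ε ω)), ← Real.exp_add]
    rw [two_mul]
  have hHat_sq_int : Integrable (fun ω => lamHat ω ^ 2) μ := by
    rw [hHat_sq_eq]
    exact (hprod (fun x => x ^ 2) (fun x => Real.exp (2 * x)) (measurable_id.pow_const 2)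
      ((measurable_id.const_mul 2).exp) hlam_sq (hIt 2)).1
  have hHat_meas : AEStronglyMeasurable lamHat μ := by
    rw [hlamHat]
    exact (hlam_meas.mul hε_meas.exp).aestronglyMeasurable
  have hHat_mem : MemLp lamHat 2 μ :=
    (memLp_two_iff_integrable_sq hHat_meas).mpr hHat_sq_int
  have hHat_sq_val : ∫ ω, lamHat ω ^ 2 ∂μ = q * e ^ 2 := by
    rw [hHat_sq_eq]
    rw [(hprod (fun x => x ^ 2) (fun x => Real.exp (2 * x)) (measurable_id.pow_const 2)
      ((measurable_id.const_mul 2).exp) hlam_sq (hIt 2)).2, hEt 2, hE2]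
  have hVh : variance lamHat μ = q * e ^ 2 - m ^ 2 * e := by
    rw [variance_eq_sub hHat_mem]
    have h1 : (μ[lamHat ^ 2] : ℝ) = ∫ ω, lamHat ω ^ 2 ∂μ := rfl
    have h2 : (μ[lamHat] : ℝ) = ∫ ω, lamHat ω ∂μ := rfl
    rw [h1, h2, hHat_sq_val, hHat_int, mul_pow, hE1sq]
  set Vh := variance lamHat μ with hVh_def
  have hVh_pos : 0 < Vh := by
    rw [hVh]
    have h1 : (1 : ℝ) ≤ e := by
      rw [he_def]
      exact Real.one_le_exp (v.coe_nonneg)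
    have hq_eq : q = s2 + m ^ 2 := by rw [hvar_lam]; ring
    rw [hq_eq]
    have heq2 : (s2 + m ^ 2) * e ^ 2 - m ^ 2 * e = s2 * e ^ 2 + m ^ 2 * e * (e - 1) := by ring
    rw [heq2]
    have h2 : 0 < s2 * e ^ 2 := by positivity
    have h3 : 0 ≤ m ^ 2 * e * (e - 1) :=
      mul_nonneg (by positivity) (by linarith)
    linarith
  -- correlation squared
  have hρ2 : ρ ^ 2 = e * s2 / Vh := by
    have hsqV : Real.sqrt Vh ^ 2 = Vh := Real.sq_sqrt (variance_nonneg lamHat μ)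
    have hsqs : Real.sqrt s2 ^ 2 = s2 := Real.sq_sqrt (variance_nonneg lam μ)
    have hstep : ρ ^ 2 = (Real.exp ((v : ℝ) * 1 ^ 2 / 2) * s2) ^ 2 / (Vh * s2) := by
      rw [hρ, hHatlam, hHat_int, div_pow, mul_pow (Real.sqrt Vh), hsqV, hsqs]
      congr 2
      rw [hvar_lam]; ring
    rw [hstep, mul_pow, hE1sq]
    field_simp
  -- CV squared
  have hCV2 : CV ^ 2 = s2 / m ^ 2 := by
    rw [hCV, div_pow, Real.sq_sqrt (variance_nonneg lam μ)]
  -- the base equals e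
  have hbase : (1 + ρ ^ 2 * (CV ^ 2)⁻¹) / (ρ ^ 2 * (1 + (CV ^ 2)⁻¹)) = e := by
    have hq_eq : q = s2 + m ^ 2 := by rw [hvar_lam]; ring
    have hVh_eq : Vh = (s2 + m ^ 2) * e ^ 2 - m ^ 2 * e := by rw [hVh, hq_eq]
    rw [hρ2, hCV2, hVh_eq]
    have h1 : (s2 + m ^ 2) * e ^ 2 - m ^ 2 * e ≠ 0 := by
      rw [← hVh_eq]; exact hVh_pos.ne'
    have h1' : e * s2 + e * m ^ 2 - m ^ 2 ≠ 0 := by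
      intro h; apply h1; linear_combination e * h
    rw [show (s2 + m ^ 2) * e ^ 2 - m ^ 2 * e = e * (e * s2 + e * m ^ 2 - m ^ 2) by ring]
    generalize hD : e * s2 + e * m ^ 2 - m ^ 2 = D at h1'
    field_simp
    linear_combination (-1 : ℝ) * hD
  -- numerator and denominator of LR
  have hnum : ∫ ω, lam ω * (K * p ω ^ (-η)) ∂μ
      = (K * M ^ (-η)) * (J * Real.exp ((v : ℝ) * (-η) ^ 2 / 2)) := by
    have hae : (fun ω => lam ω * (K * p ω ^ (-η)))
        =ᵐ[μ] fun ω => (K * M ^ (-η)) * (lam ω ^ (1 - η) * Real.exp (-η * ε ω)) := by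
      filter_upwards [hlam_pos] with ω hl
      rw [hp, hlamHat]
      exact rpow_num_helper hM hl
    rw [integral_congr_ae hae, MeasureTheory.integral_const_mul]
    congr 1
    rw [(hprod (fun x => x ^ (1 - η)) (fun x => Real.exp (-η * x))
      (measurable_rpow_const (1 - η)) ((measurable_id.const_mul (-η)).exp) hmom (hIt (-η))).2,
      hEt (-η), ← hJ_def]
  have hden : ∫ ω, p ω * (K * p ω ^ (-η)) ∂μ
      = (K * M ^ (1 - η)) * (J * Real.exp ((v : ℝ) * (1 - η) ^ 2 / 2)) := by
    have hae : (fun ω => p ω * (K * p ω ^ (-η)))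
        =ᵐ[μ] fun ω => (K * M ^ (1 - η)) * (lam ω ^ (1 - η) * Real.exp ((1 - η) * ε ω)) := by
      filter_upwards [hlam_pos] with ω hl
      rw [hp, hlamHat]
      exact rpow_den_helper hM hl
    rw [integral_congr_ae hae, MeasureTheory.integral_const_mul]
    congr 1
    rw [(hprod (fun x => x ^ (1 - η)) (fun x => Real.exp ((1 - η) * x))
      (measurable_rpow_const (1 - η)) ((measurable_id.const_mul (1 - η)).exp) hmom
      (hIt (1 - η))).2, hEt (1 - η), ← hJ_def]
  -- compute LR
  have hJ_pos : 0 < J := hmom_pos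
  have hLR_val : LR = (1 / M) * Real.exp ((v : ℝ) * (2 * η - 1) / 2) := by
    rw [hLR, hnum, hden]
    have hMn : (0 : ℝ) < M ^ (-η) := Real.rpow_pos_of_pos hM _
    have hMd : (0 : ℝ) < M ^ (1 - η) := Real.rpow_pos_of_pos hM _
    have hA : (0 : ℝ) < Real.exp ((v : ℝ) * (-η) ^ 2 / 2) := Real.exp_pos _
    have hB : (0 : ℝ) < Real.exp ((v : ℝ) * (1 - η) ^ 2 / 2) := Real.exp_pos _
    rw [div_eq_iff (by positivity)]
    have hMr : M ^ (-η) = M ^ (1 - η) / M := by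
      rw [eq_div_iff hM.ne']
      nth_rewrite 2 [← Real.rpow_one M]
      rw [← Real.rpow_add hM]
      congr 1 <;> ring
    have hEr : Real.exp ((v : ℝ) * (-η) ^ 2 / 2)
        = Real.exp ((v : ℝ) * (2 * η - 1) / 2) * Real.exp ((v : ℝ) * (1 - η) ^ 2 / 2) := by
      rw [← Real.exp_add]
      congr 1
      ring
    rw [hMr, hEr]
    field_simp
  rw [hLR_val, hbase, he_def, ← Real.exp_mul]
  congr 2
  ring
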